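/- Let ρ ∈ ℝ, B = [[1, ρ],[−ρ, −1]], and V(θ) = diag(v(θ), −v(θ)) where v : 𝕋 → ℝ satisfies v(θ + 1/2) = −v(θ) for all θ. Then for every even n ≥ 2, every ω, θ ∈ 𝕋, and every E ∈ ℝ, the periodic-boundary determinant of the 2×2 block Jacobi operator satisfies f_{E,n}(θ + 1/2) = f_{E,n}(θ). -/

import Mathlib

noncomputable section

open Matrix

/-- Finite-volume block matrix `P_n(θ)` with periodic boundary conditions (constant hopping
block `B`). -/
def Pmat {d : ℕ} (B : Matrix (Fin d) (Fin d) ℂ) (V : ℝ → Matrix (Fin d) (Fin d) ℂ)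
    (ω : ℝ) (n : ℕ) (θ : ℝ) : Matrix (Fin n × Fin d) (Fin n × Fin d) ℂ := fun p q =>
  (if p.1 = q.1 then V (θ + ((n - 1 - (p.1 : ℕ) : ℕ) : ℝ) * ω) p.2 q.2 else 0)
  + (if (p.1 : ℕ) = (q.1 : ℕ) + 1 then B p.2 q.2 else 0)
  + (if (q.1 : ℕ) = (p.1 : ℕ) + 1 then Bᴴ p.2 q.2 else 0)
  + (if (p.1 : ℕ) = 0 ∧ (q.1 : ℕ) = n - 1 then B p.2 q.2 else 0)
  + (if (q.1 : ℕ) = 0 ∧ (p.1 : ℕ) = n - 1 then Bᴴ p.2 q.2 else 0)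

/-- `f_{E,n}(θ) = det(P_n(θ) − E·I_{2n})`. -/
def fdet {d : ℕ} (B : Matrix (Fin d) (Fin d) ℂ) (V : ℝ → Matrix (Fin d) (Fin d) ℂ)
    (ω : ℝ) (E : ℝ) (n : ℕ) (θ : ℝ) : ℂ :=
  (Pmat B V ω n θ - (E : ℂ) • (1 : Matrix (Fin n × Fin d) (Fin n × Fin d) ℂ)).det

/-- XY hopping block `B = [[1, ρ],[−ρ, −1]]`. -/
def Bxy (ρ : ℝ) : Matrix (Fin 2) (Fin 2) ℂ :=
  !![(1 : ℂ), (ρ : ℂ); (-ρ : ℂ), (-1 : ℂ)]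

/-- XY potential block `V(θ) = diag(v(θ), −v(θ))`. -/
def Vxy (v : ℝ → ℝ) (θ : ℝ) : Matrix (Fin 2) (Fin 2) ℂ :=
  !![(v θ : ℂ), 0; 0, (-(v θ) : ℂ)]

lemma comb_aux (sj sk x1 x2 x3 x4 x5 x6 y1 y2 y3 y4 y5 y6 : ℂ)
    (h1 : x1 = sj * y1 * sk) (h2 : x2 = sj * y2 * sk) (h3 : x3 = sj * y3 * sk)
    (h4 : x4 = sj * y4 * sk) (h5 : x5 = sj * y5 * sk) (h6 : x6 = sj * y6 * sk) :
    x1 + x2 + x3 + x4 + x5 - x6 = sj * (y1 + y2 + y3 + y4 + y5 - y6) * sk := by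
  rw [h1, h2, h3, h4, h5, h6]; ring

/-- For the XY blocks with `v(θ+1/2) = −v(θ)` and even `n`, `f_{E,n}(θ+1/2) = f_{E,n}(θ)`. -/
theorem fdet_xy_half_periodic (ρ : ℝ) (v : ℝ → ℝ) (hv : ∀ θ : ℝ, v (θ + 1 / 2) = -v θ)
    (n : ℕ) (hn : 2 ≤ n) (heven : Even n) (ω θ : ℝ) (E : ℝ) :
    fdet (Bxy ρ) (Vxy v) ω E n (θ + 1 / 2) = fdet (Bxy ρ) (Vxy v) ω E n θ := by
  classical
  set τ : Fin 2 ≃ Fin 2 := Equiv.swap 0 1 with hτ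
  set s : Fin n → ℂ := fun j => (-1 : ℂ) ^ (j : ℕ) with hsdef
  have hs2 : ∀ j : Fin n, s j * s j = 1 := by
    intro j
    rw [hsdef]
    simp [← mul_pow]
  have hodd : ∀ j k : Fin n, Odd ((j : ℕ) + (k : ℕ)) → s j * s k = -1 := by
    intro j k h
    rw [hsdef]
    simp only [← pow_add]
    exact h.neg_one_pow
  have hoddn : Odd (n - 1) := Nat.Even.sub_odd (by omega) heven odd_one
  have hV : ∀ (x : ℝ) (a b : Fin 2),
      Vxy v (x + 1 / 2) a b = Vxy v x (τ a) (τ b) := by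
    intro x a b
    have hvx : v (x + 2⁻¹) = -v x := by
      rw [show (2⁻¹ : ℝ) = 1 / 2 by norm_num]; exact hv x
    fin_cases a <;> fin_cases b <;>
      simp [Vxy, hvx, hτ, Equiv.swap_apply_left, Equiv.swap_apply_right]
  have hB : ∀ a b : Fin 2, Bxy ρ a b = -Bxy ρ (τ a) (τ b) := by
    intro a b
    fin_cases a <;> fin_cases b <;>
      simp [Bxy, hτ, Equiv.swap_apply_left, Equiv.swap_apply_right]
  have hBH : ∀ a b : Fin 2, (Bxy ρ)ᴴ a b = -(Bxy ρ)ᴴ (τ a) (τ b) := by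
    intro a b
    fin_cases a <;> fin_cases b <;>
      simp [Bxy, conjTranspose_apply, hτ, Equiv.swap_apply_left, Equiv.swap_apply_right]
  set e : (Fin n × Fin 2) ≃ (Fin n × Fin 2) := Equiv.prodCongr (Equiv.refl (Fin n)) τ with he
  set A : Matrix (Fin n × Fin 2) (Fin n × Fin 2) ℂ :=
    Pmat (Bxy ρ) (Vxy v) ω n θ - (E : ℂ) • 1 with hA
  have key : Pmat (Bxy ρ) (Vxy v) ω n (θ + 1 / 2) - (E : ℂ) • 1
      = diagonal (fun p : Fin n × Fin 2 => s p.1) * (A.submatrix e e) *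
        diagonal (fun p : Fin n × Fin 2 => s p.1) := by
    ext ⟨j, a⟩ ⟨k, b⟩
    simp only [hA, he, Matrix.sub_apply, Matrix.smul_apply, smul_eq_mul, one_apply, mul_diagonal,
      diagonal_mul, submatrix_apply, Equiv.prodCongr_apply, Equiv.coe_refl, Prod.map,
      id_eq, Pmat, Prod.mk.injEq, EmbeddingLike.apply_eq_iff_eq]
    apply comb_aux
    · split_ifs with h
      · subst h
        rw [mul_right_comm, hs2, one_mul,
          show θ + 1 / 2 + ((n - 1 - (j : ℕ) : ℕ) : ℝ) * ω
            = (θ + ((n - 1 - (j : ℕ) : ℕ) : ℝ) * ω) + 1 / 2 by ring, hV]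
      · simp
    · split_ifs with h
      · rw [mul_right_comm, hodd j k ⟨(k : ℕ), by omega⟩, neg_one_mul]
        exact hB a b
      · simp
    · split_ifs with h
      · rw [mul_right_comm, hodd j k ⟨(j : ℕ), by omega⟩, neg_one_mul]
        exact hBH a b
      · simp
    · split_ifs with h
      · have : Odd ((j : ℕ) + (k : ℕ)) := by rw [h.1, h.2]; simpa using hoddn
        rw [mul_right_comm, hodd j k this, neg_one_mul]
        exact hB a b
      · simp
    · split_ifs with h
      · have : Odd ((j : ℕ) + (k : ℕ)) := by rw [h.1, h.2]; simpa using hoddn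
        rw [mul_right_comm, hodd j k this, neg_one_mul]
        exact hBH a b
      · simp
    · split_ifs with h
      · obtain ⟨h1, h2⟩ := h
        subst h1
        rw [mul_one, mul_right_comm, hs2, one_mul]
      · simp
  rw [fdet, fdet, key, det_mul, det_mul, det_submatrix_equiv_self, det_diagonal]
  have hprod : (∏ p : Fin n × Fin 2, s p.1) * (∏ p : Fin n × Fin 2, s p.1) = 1 := by
    rw [← Finset.prod_mul_distrib]
    exact Finset.prod_eq_one fun p _ => hs2 p.1
  rw [← hA, mul_comm, ← mul_assoc, hprod, one_mul]
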